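/- Assume m ≥ 2. Then for every z ∈ ℂ, C(z) = Σ_{i=0}^{m−1} Σ_{j=1}^{n} Σ_{t=1}^{n} (V_i)_{tj} · Q̃_{(i,j),(i−1,t)} · λ_t · z^{m−2} · ∏_{ℓ≠t}(z^m − λ_ℓ^m), where Q̃_{(i,j),(i−1,t)} denotes the entry of Q̃ in row (i,j) and column (i−1,t) (indices in ℤ/mℤ). -/

import Mathlib

open Matrix BigOperators

noncomputable section

/-- The block matrix `L̃` with diagonal blocks `Λ = diag(λ₁,…,λₙ)` at positions `(h, h+1)`:
its entry in row `(h,j)` and column `(i,k)` is `λⱼ` if `k = j` and `i = h + 1` in `ℤ/mℤ`,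
and `0` otherwise. -/
def Ltilde (m n : ℕ) (lam : Fin n → ℂ) :
    Matrix (ZMod m × Fin n) (ZMod m × Fin n) ℂ :=
  Matrix.of fun p q => if q.2 = p.2 ∧ q.1 = p.1 + 1 then lam p.2 else 0

/-- `|g| = g₀ + g₁ + ⋯ + g_{m-1}`. -/
def gAbs (m : ℕ) (g : ZMod m → ℂ) : ℂ :=
  ∑ s ∈ Finset.range m, g (s : ZMod m)

/-- `cᵢ = Σ_{r=0}^{i} g_r − Σ_{s=0}^{m−1} ((m−s)/m)·g_s`, the index `i` read modulo `m`. -/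
def cConst (m : ℕ) (g : ZMod m → ℂ) (i : ZMod m) : ℂ :=
  (∑ r ∈ Finset.range (i.val + 1), g (r : ZMod m)) -
    ∑ s ∈ Finset.range m, (((m : ℂ) - (s : ℂ)) / (m : ℂ)) * g (s : ZMod m)

/-- The spin matrix `Q̃` built from `V i = ṽᵢ·w̃ᵢ`: its entry in row `(h,j)` and column `(i,k)`
vanishes unless `h = i + 1` in `ℤ/mℤ`, in which case (taking the representative
`i ∈ {0,…,m−1}`) it equals
`φⱼ + (1/λⱼ)·(cᵢ + Σ_{r=0}^{i}(V_r)ⱼⱼ − Σ_{s=0}^{m−1}((m−s)/m)·(V_s)ⱼⱼ)` if `k = j`, and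
`−Σ_{h′=0}^{m−1}(V_{i−h′})ⱼₖ·λⱼ^{m−h′−1}·λₖ^{h′}/(λⱼ^m − λₖ^m)` if `k ≠ j`. -/
def QtildeS (m n : ℕ) (g : ZMod m → ℂ) (lam phi : Fin n → ℂ)
    (V : ZMod m → Matrix (Fin n) (Fin n) ℂ) :
    Matrix (ZMod m × Fin n) (ZMod m × Fin n) ℂ :=
  Matrix.of fun p q =>
    if p.1 = q.1 + 1 then
      if q.2 = p.2 then
        phi p.2 + (1 / lam p.2) *
          (cConst m g q.1 + (∑ r ∈ Finset.range (q.1.val + 1), (V (r : ZMod m)) p.2 p.2) -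
            ∑ s ∈ Finset.range m, (((m : ℂ) - (s : ℂ)) / (m : ℂ)) * (V (s : ZMod m)) p.2 p.2)
      else
        -∑ h' ∈ Finset.range m,
          (V (q.1 - (h' : ZMod m))) p.2 q.2 * lam p.2 ^ (m - h' - 1) * lam q.2 ^ h' /
            (lam p.2 ^ m - lam q.2 ^ m)
    else 0

/-- `A(z) = det(z·1 − L̃)`. -/
def Afun (m n : ℕ) [NeZero m] (lam : Fin n → ℂ) (z : ℂ) : ℂ :=
  (z • (1 : Matrix (ZMod m × Fin n) (ZMod m × Fin n) ℂ) - Ltilde m n lam).det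

/-- `D(z) = tr(Q̃ · adj(z·1 − L̃))` (spin case). -/
def DfunS (m n : ℕ) [NeZero m] (g : ZMod m → ℂ) (lam phi : Fin n → ℂ)
    (V : ZMod m → Matrix (Fin n) (Fin n) ℂ) (z : ℂ) : ℂ :=
  Matrix.trace (QtildeS m n g lam phi V *
    (z • (1 : Matrix (ZMod m × Fin n) (ZMod m × Fin n) ℂ) - Ltilde m n lam).adjugate)

/-- The block-diagonal matrix `B` with entry `(V_h)ⱼₖ` in row `(h,j)` and column `(h,k)`,
and `0` in positions with differing first indices. -/
def Bmat (m n : ℕ) (V : ZMod m → Matrix (Fin n) (Fin n) ℂ) :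
    Matrix (ZMod m × Fin n) (ZMod m × Fin n) ℂ :=
  Matrix.of fun p q => if p.1 = q.1 then (V p.1) p.2 q.2 else 0

/-- `C(z) = tr(Q̃ · adj(z·1 − L̃) · B)` (spin case). -/
def CfunS (m n : ℕ) [NeZero m] (g : ZMod m → ℂ) (lam phi : Fin n → ℂ)
    (V : ZMod m → Matrix (Fin n) (Fin n) ℂ) (z : ℂ) : ℂ :=
  Matrix.trace (QtildeS m n g lam phi V *
    (z • (1 : Matrix (ZMod m × Fin n) (ZMod m × Fin n) ℂ) - Ltilde m n lam).adjugate *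
    Bmat m n V)

section SpinAux

/-- Candidate adjugate of `z•1 - L̃`. -/
def adjX (m n : ℕ) [NeZero m] (lam : Fin n → ℂ) (z : ℂ) :
    Matrix (ZMod m × Fin n) (ZMod m × Fin n) ℂ :=
  Matrix.of fun p q =>
    if q.2 = p.2 then
      z ^ (m - 1 - (q.1 - p.1).val) * lam p.2 ^ (q.1 - p.1).val *
        ∏ l ∈ Finset.univ.erase p.2, (z ^ m - lam l ^ m)
    else 0

lemma Ltilde_mul_apply (m n : ℕ) [NeZero m] (lam : Fin n → ℂ)
    (X : Matrix (ZMod m × Fin n) (ZMod m × Fin n) ℂ) (p q : ZMod m × Fin n) :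
    (Ltilde m n lam * X) p q = lam p.2 * X (p.1 + 1, p.2) q := by
  simp [Matrix.mul_apply, Ltilde, Fintype.sum_prod_type, ite_and, ite_mul, zero_mul,
    Finset.sum_ite_eq, Finset.sum_ite_eq']

lemma mulX (m n : ℕ) [NeZero m] (hm : 2 ≤ m) (lam : Fin n → ℂ) (z : ℂ) :
    (z • (1 : Matrix (ZMod m × Fin n) (ZMod m × Fin n) ℂ) - Ltilde m n lam) * adjX m n lam z
      = (∏ l : Fin n, (z ^ m - lam l ^ m)) • (1 : Matrix (ZMod m × Fin n) (ZMod m × Fin n) ℂ) := by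
  ext p q
  rw [Matrix.sub_mul, Matrix.smul_mul, Matrix.one_mul, Matrix.sub_apply, Matrix.smul_apply,
    Ltilde_mul_apply, smul_eq_mul, Matrix.smul_apply, Matrix.one_apply, smul_eq_mul]
  rcases p with ⟨h, j⟩
  rcases q with ⟨i, k⟩
  simp only [adjX, Matrix.of_apply]
  by_cases hk : k = j
  · subst hk
    simp only [eq_self_iff_true, ite_true]
    by_cases hi : i = h
    · subst hi
      have h10 : i - i = (0 : ZMod m) := sub_self i
      have h11 : i - (i + 1) = (-1 : ZMod m) := by ring
      obtain ⟨m', rfl⟩ := Nat.exists_eq_succ_of_ne_zero (NeZero.ne m)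
      rw [h10, h11, ZMod.val_zero, ZMod.val_neg_one]
      simp only [Nat.sub_zero, Nat.succ_sub_one, Nat.sub_self, pow_zero, mul_one, one_mul,
        Nat.succ_eq_add_one, eq_self_iff_true, ite_true]
      rw [← Finset.mul_prod_erase Finset.univ _ (Finset.mem_univ k)]
      ring
    · -- i ≠ h
      rw [if_neg (fun hc => hi ((Prod.ext_iff.mp hc).1.symm))]
      set s := (i - h).val with hs
      have hs0 : i - h ≠ 0 := sub_ne_zero.mpr hi
      have hs1 : 1 ≤ s := by
        rcases Nat.eq_zero_or_pos s with h0 | h1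
        · exact absurd ((ZMod.val_eq_zero _).mp h0) hs0
        · exact h1
      have hslt : s < m := ZMod.val_lt _
      have hcast : ((s : ℕ) : ZMod m) = i - h := by
        rw [hs, ZMod.natCast_val, ZMod.cast_id]
      have hsub : (i - (h + 1)) = ((s - 1 : ℕ) : ZMod m) := by
        have h2 : ((s - 1 : ℕ) : ZMod m) = ((s : ℕ) : ZMod m) - 1 := by
          simpa using (Nat.cast_sub hs1 : ((s - 1 : ℕ) : ZMod m) = _)
        rw [h2, hcast]; ring
      have hval : (i - (h + 1)).val = s - 1 := by
        rw [hsub, ZMod.val_cast_of_lt (by omega)]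
      rw [hval]
      have he1 : m - 1 - (s - 1) = (m - 1 - s) + 1 := by omega
      have he2 : lam k ^ s = lam k ^ (s - 1) * lam k := by
        rw [← pow_succ]; congr 1; omega
      rw [he1, he2, pow_succ]
      ring
  · -- k ≠ j
    rw [if_neg hk, if_neg hk, if_neg (fun hc => hk ((Prod.ext_iff.mp hc).2.symm))]
    ring

end SpinAux
section SpinDet

lemma det_cycmat (k : ℕ) (hk : 1 ≤ k) (z a : ℂ) :
    (Matrix.of fun r c : Fin (k+1) =>
      (if c = r then z else 0) - (if (c : ℕ) = ((r : ℕ) + 1) % (k+1) then a else 0)).det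
      = z ^ (k+1) - a ^ (k+1) := by
  set A : Matrix (Fin (k+1)) (Fin (k+1)) ℂ := Matrix.of fun r c : Fin (k+1) =>
      (if c = r then z else 0) - (if (c : ℕ) = ((r : ℕ) + 1) % (k+1) then a else 0) with hA
  have hent : ∀ r c : Fin (k+1), A r c
      = (if c = r then z else 0) - (if (c : ℕ) = ((r : ℕ) + 1) % (k+1) then a else 0) :=
    fun r c => rfl
  rw [Matrix.det_succ_column_zero]
  have hvanish : ∀ x ∈ Finset.univ, x ∉ ({0, Fin.last k} : Finset (Fin (k+1))) →
      (-1 : ℂ) ^ (x : ℕ) * A x 0 * (A.submatrix x.succAbove Fin.succ).det = 0 := by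
    intro x _ hx
    simp only [Finset.mem_insert, Finset.mem_singleton, not_or] at hx
    obtain ⟨hx0, hxl⟩ := hx
    have hxv0 : (x : ℕ) ≠ 0 := fun hc => hx0 (Fin.ext hc)
    have hxvl : (x : ℕ) ≠ k := fun hc => hxl (Fin.ext (by simp [Fin.val_last, hc]))
    have c1 : ¬ (0 : Fin (k+1)) = x := fun hc => hxv0 (by simp [← hc])
    have c2 : ¬ ((0 : Fin (k+1)) : ℕ) = ((x : ℕ) + 1) % (k+1) := by
      have hxlt : (x : ℕ) < k + 1 := x.isLt
      rw [Nat.mod_eq_of_lt (by omega)]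
      simp only [Fin.val_zero]
      omega
    have hA0 : A x 0 = 0 := by rw [hent, if_neg c1, if_neg c2, sub_zero]
    rw [hA0]; ring
  rw [← Finset.sum_subset (Finset.subset_univ ({0, Fin.last k} : Finset (Fin (k+1)))) hvanish]
  have h0l : (0 : Fin (k+1)) ≠ Fin.last k := by
    intro hc
    have hc' := congrArg Fin.val hc
    simp only [Fin.val_zero, Fin.val_last] at hc'
    omega
  rw [Finset.sum_pair h0l]
  have hA00 : A 0 0 = z := by
    have c2 : ¬ ((0 : Fin (k+1)) : ℕ) = (((0 : Fin (k+1)) : ℕ) + 1) % (k+1) := by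
      simp only [Fin.val_zero]
      rw [Nat.mod_eq_of_lt (by omega)]
      omega
    rw [hent, if_pos rfl, if_neg c2, sub_zero]
  have hAl0 : A (Fin.last k) 0 = -a := by
    have c2 : ((0 : Fin (k+1)) : ℕ) = (((Fin.last k : Fin (k+1)) : ℕ) + 1) % (k+1) := by
      simp only [Fin.val_zero, Fin.val_last]
      exact (Nat.mod_self _).symm
    rw [hent, if_neg (fun hc => h0l hc), if_pos c2, zero_sub]
  have hminor0 : ((A.submatrix ((0 : Fin (k+1)).succAbove) Fin.succ)).det = z ^ k := by
    have htri : (A.submatrix ((0 : Fin (k+1)).succAbove) Fin.succ).BlockTriangular id := by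
      intro r c hrc
      have hrc' : (c : ℕ) < (r : ℕ) := hrc
      have hr : (r : ℕ) < k := r.isLt
      show A ((0 : Fin (k+1)).succAbove r) (Fin.succ c) = 0
      rw [Fin.succAbove_zero, hent]
      have c1 : ¬ (Fin.succ c) = (Fin.succ r) := by
        intro hcon
        have h3 := congrArg Fin.val hcon
        simp only [Fin.val_succ] at h3
        omega
      have c2 : ¬ ((Fin.succ c : Fin (k+1)) : ℕ) = (((Fin.succ r : Fin (k+1)) : ℕ) + 1) % (k+1) := by
        simp only [Fin.val_succ]
        rcases Nat.lt_or_ge ((r : ℕ) + 1 + 1) (k+1) with h | h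
        · rw [Nat.mod_eq_of_lt h]; omega
        · have h2 : (r : ℕ) + 1 + 1 = k + 1 := by omega
          rw [h2, Nat.mod_self]; omega
      rw [if_neg c1, if_neg c2, sub_zero]
    rw [Matrix.det_of_upperTriangular htri]
    have hdiag : ∀ r : Fin k, (A.submatrix ((0 : Fin (k+1)).succAbove) Fin.succ) r r = z := by
      intro r
      have hr : (r : ℕ) < k := r.isLt
      show A ((0 : Fin (k+1)).succAbove r) (Fin.succ r) = z
      rw [Fin.succAbove_zero, hent]
      have c2 : ¬ ((Fin.succ r : Fin (k+1)) : ℕ) = (((Fin.succ r : Fin (k+1)) : ℕ) + 1) % (k+1) := by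
        simp only [Fin.val_succ]
        rcases Nat.lt_or_ge ((r : ℕ) + 1 + 1) (k+1) with h | h
        · rw [Nat.mod_eq_of_lt h]; omega
        · have h2 : (r : ℕ) + 1 + 1 = k + 1 := by omega
          rw [h2, Nat.mod_self]; omega
      rw [if_pos rfl, if_neg c2, sub_zero]
    rw [Finset.prod_congr rfl fun r _ => hdiag r]
    simp
  have hminor1 : ((A.submatrix ((Fin.last k).succAbove) Fin.succ)).det = (-a) ^ k := by
    have htri : (A.submatrix ((Fin.last k).succAbove) Fin.succ).BlockTriangular
        OrderDual.toDual := by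
      intro r c hrc
      have hrc' : (r : ℕ) < (c : ℕ) := hrc
      have hr : (r : ℕ) < k := r.isLt
      have hc : (c : ℕ) < k := c.isLt
      show A ((Fin.last k).succAbove r) (Fin.succ c) = 0
      rw [Fin.succAbove_last, hent]
      have c1 : ¬ (Fin.succ c) = (Fin.castSucc r) := by
        intro hcon
        have h3 := congrArg Fin.val hcon
        simp only [Fin.val_succ, Fin.coe_castSucc] at h3
        omega
      have c2 : ¬ ((Fin.succ c : Fin (k+1)) : ℕ) = (((Fin.castSucc r : Fin (k+1)) : ℕ) + 1) % (k+1) := by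
        simp only [Fin.val_succ, Fin.coe_castSucc]
        rw [Nat.mod_eq_of_lt (by omega)]
        omega
      rw [if_neg c1, if_neg c2, sub_zero]
    rw [Matrix.det_of_lowerTriangular _ htri]
    have hdiag : ∀ r : Fin k, (A.submatrix ((Fin.last k).succAbove) Fin.succ) r r = -a := by
      intro r
      have hr : (r : ℕ) < k := r.isLt
      show A ((Fin.last k).succAbove r) (Fin.succ r) = -a
      rw [Fin.succAbove_last, hent]
      have c1 : ¬ (Fin.succ r) = (Fin.castSucc r) := by
        intro hcon
        have h3 := congrArg Fin.val hcon
        simp only [Fin.val_succ, Fin.coe_castSucc] at h3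
        omega
      have c2 : ((Fin.succ r : Fin (k+1)) : ℕ) = (((Fin.castSucc r : Fin (k+1)) : ℕ) + 1) % (k+1) := by
        simp only [Fin.val_succ, Fin.coe_castSucc]
        rw [Nat.mod_eq_of_lt (by omega)]
      rw [if_neg c1, if_pos c2, zero_sub]
    rw [Finset.prod_congr rfl fun r _ => hdiag r]
    simp
  rw [hA00, hAl0, hminor0, hminor1]
  simp only [Fin.val_zero, Fin.val_last, pow_zero, one_mul]
  have h1 : z * z ^ k = z ^ (k+1) := (pow_succ' z k).symm
  have h2 : (-1 : ℂ) ^ k * -a * (-a) ^ k = -(a ^ (k+1)) := by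
    have h3 : (-1 : ℂ) ^ k * -a * (-a) ^ k = (-1 : ℂ) ^ k * (-a) ^ (k+1) := by
      rw [pow_succ' (-a) k]; ring
    rw [h3, neg_pow a (k+1), ← mul_assoc, ← pow_add]
    have hodd : Odd (k + (k+1)) := ⟨k, by ring⟩
    rw [hodd.neg_one_pow]; ring
  rw [h1, h2, ← sub_eq_add_neg]

end SpinDet
section SpinDetL

/-- The equivalence `ZMod (k+1) ≃ Fin (k+1)` given by `val`. -/
def zmodFin (k : ℕ) : ZMod (k+1) ≃ Fin (k+1) where
  toFun x := ⟨x.val, ZMod.val_lt x⟩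
  invFun i := ((i : ℕ) : ZMod (k+1))
  left_inv x := by simp [ZMod.natCast_val, ZMod.cast_id]
  right_inv i := by
    apply Fin.ext
    simp [ZMod.val_natCast, Nat.mod_eq_of_lt i.isLt]

lemma zmodFin_succ_iff (k : ℕ) (hk : 1 ≤ k) (x y : ZMod (k+1)) :
    x = y + 1 ↔ ((zmodFin k x : ℕ) = ((zmodFin k y : ℕ) + 1) % (k+1)) := by
  haveI : Fact (1 < k + 1) := ⟨by omega⟩
  have hval : ∀ w : ZMod (k+1), (zmodFin k w : ℕ) = w.val := fun _ => rfl
  rw [hval, hval]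
  constructor
  · rintro rfl
    rw [ZMod.val_add, ZMod.val_one]
  · intro hxy
    have h2 : x.val = (y + 1).val := by rw [ZMod.val_add, ZMod.val_one]; exact hxy
    have h3 := congrArg (fun t : ℕ => (t : ZMod (k+1))) h2
    simpa [ZMod.natCast_val, ZMod.cast_id] using h3

lemma det_zsmul_sub_Ltilde (m n : ℕ) [NeZero m] (hm : 2 ≤ m) (lam : Fin n → ℂ) (z : ℂ) :
    (z • (1 : Matrix (ZMod m × Fin n) (ZMod m × Fin n) ℂ) - Ltilde m n lam).det
      = ∏ l : Fin n, (z ^ m - lam l ^ m) := by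
  obtain ⟨k, rfl⟩ := Nat.exists_eq_succ_of_ne_zero (NeZero.ne m)
  have hk : 1 ≤ k := by omega
  set e := zmodFin k with he
  set ee := Equiv.prodCongr e (Equiv.refl (Fin n)) with hee
  rw [← Matrix.det_reindex_self ee
    (z • (1 : Matrix (ZMod (k+1) × Fin n) (ZMod (k+1) × Fin n) ℂ) - Ltilde (k+1) n lam)]
  have hre : Matrix.reindex ee ee
      (z • (1 : Matrix (ZMod (k+1) × Fin n) (ZMod (k+1) × Fin n) ℂ) - Ltilde (k+1) n lam)
      = Matrix.blockDiagonal (fun j : Fin n => Matrix.of fun r c : Fin (k+1) =>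
          (if c = r then z else 0) - (if (c : ℕ) = ((r : ℕ) + 1) % (k+1) then lam j else 0)) := by
    ext ⟨r, j⟩ ⟨c, j'⟩
    rw [Matrix.reindex_apply, Matrix.submatrix_apply]
    have hsymm : ee.symm (r, j) = (e.symm r, j) := rfl
    have hsymm' : ee.symm (c, j') = (e.symm c, j') := rfl
    rw [hsymm, hsymm', Matrix.sub_apply, Matrix.smul_apply, Matrix.one_apply, smul_eq_mul,
      Matrix.blockDiagonal_apply]
    show (z * if (e.symm r, j) = (e.symm c, j') then 1 else 0) -
        Ltilde (k+1) n lam (e.symm r, j) (e.symm c, j')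
      = if j = j' then _ else 0
    by_cases hj : j = j'
    · subst hj
      rw [if_pos rfl]
      show _ = (if c = r then z else 0) - (if (c : ℕ) = ((r : ℕ) + 1) % (k+1) then lam j else 0)
      have hz : (if (e.symm r, j) = (e.symm c, j) then (1:ℂ) else 0) = (if c = r then 1 else 0) := by
        by_cases hrc : c = r
        · subst hrc; rw [if_pos rfl, if_pos rfl]
        · rw [if_neg ?_, if_neg hrc]
          intro hcon
          exact hrc (e.symm.injective (Prod.ext_iff.mp hcon).1).symm
      have hL : Ltilde (k+1) n lam (e.symm r, j) (e.symm c, j)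
          = (if (c : ℕ) = ((r : ℕ) + 1) % (k+1) then lam j else 0) := by
        show (if j = j ∧ e.symm c = e.symm r + 1 then lam j else 0) = _
        have hiff : (e.symm c = e.symm r + 1) ↔ ((c : ℕ) = ((r : ℕ) + 1) % (k+1)) := by
          have := zmodFin_succ_iff k hk (e.symm c) (e.symm r)
          simpa [he] using this
        by_cases hc2 : (c : ℕ) = ((r : ℕ) + 1) % (k+1)
        · rw [if_pos ⟨rfl, hiff.mpr hc2⟩, if_pos hc2]
        · rw [if_neg (fun hcon => hc2 (hiff.mp hcon.2)), if_neg hc2]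
      rw [hz, hL]
      by_cases hrc : c = r
      · subst hrc; rw [if_pos rfl, if_pos rfl, mul_one]
      · rw [if_neg hrc, if_neg hrc, mul_zero]
    · rw [if_neg hj]
      have hz : (if (e.symm r, j) = (e.symm c, j') then (1:ℂ) else 0) = 0 := by
        rw [if_neg]; intro hcon; exact hj (Prod.ext_iff.mp hcon).2
      have hL : Ltilde (k+1) n lam (e.symm r, j) (e.symm c, j') = 0 := by
        show (if j' = j ∧ e.symm c = e.symm r + 1 then lam j else 0) = 0
        rw [if_neg]; intro hcon; exact hj hcon.1.symm
      rw [hz, hL, mul_zero, sub_zero]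
  rw [hre, Matrix.det_blockDiagonal]
  exact Finset.prod_congr rfl fun j _ => det_cycmat k hk z (lam j)

end SpinDetL
section SpinTrace

lemma adjugate_eq_adjX (m n : ℕ) [NeZero m] (hm : 2 ≤ m) (lam : Fin n → ℂ) (z : ℂ)
    (hz : ∀ l, z ^ m ≠ lam l ^ m) :
    (z • (1 : Matrix (ZMod m × Fin n) (ZMod m × Fin n) ℂ) - Ltilde m n lam).adjugate
      = adjX m n lam z := by
  set M := z • (1 : Matrix (ZMod m × Fin n) (ZMod m × Fin n) ℂ) - Ltilde m n lam with hM
  have hdet : M.det = ∏ l : Fin n, (z ^ m - lam l ^ m) := det_zsmul_sub_Ltilde m n hm lam z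
  have hD : (∏ l : Fin n, (z ^ m - lam l ^ m)) ≠ 0 :=
    Finset.prod_ne_zero_iff.mpr fun l _ => sub_ne_zero.mpr (hz l)
  have hu : IsUnit M.det := by rw [hdet]; exact isUnit_iff_ne_zero.mpr hD
  haveI := M.invertibleOfIsUnitDet hu
  apply Matrix.mul_right_injective_of_invertible M
  show M * M.adjugate = M * adjX m n lam z
  rw [Matrix.mul_adjugate, hM, mulX m n hm lam z, hdet]

lemma CfunS_formula_of_good (m n : ℕ) [NeZero m] (hm : 2 ≤ m) (g : ZMod m → ℂ)
    (lam phi : Fin n → ℂ) (V : ZMod m → Matrix (Fin n) (Fin n) ℂ) (z : ℂ)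
    (hz : ∀ l, z ^ m ≠ lam l ^ m) :
    CfunS m n g lam phi V z =
      ∑ i : ZMod m, ∑ j : Fin n, ∑ t : Fin n,
        V i t j * QtildeS m n g lam phi V (i, j) (i - 1, t) *
          lam t * z ^ (m - 2) * ∏ l ∈ Finset.univ.erase t, (z ^ m - lam l ^ m) := by
  haveI : Fact (1 < m) := ⟨hm⟩
  rw [CfunS, adjugate_eq_adjX m n hm lam z hz, Matrix.trace, Fintype.sum_prod_type]
  refine Finset.sum_congr rfl fun i _ => Finset.sum_congr rfl fun j _ => ?_
  rw [Matrix.diag_apply, Matrix.mul_apply, Fintype.sum_prod_type_right]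
  refine Finset.sum_congr rfl fun t _ => ?_
  rw [Finset.sum_eq_single i]
  · have hB : Bmat m n V (i, t) (i, j) = V i t j := by
      show (if i = i then V i t j else 0) = V i t j
      rw [if_pos rfl]
    rw [hB, Matrix.mul_apply, Fintype.sum_prod_type]
    simp only [adjX, Matrix.of_apply, mul_ite, mul_zero, Finset.sum_ite_eq, Finset.mem_univ,
      if_true]
    rw [Finset.sum_eq_single (i - 1)]
    · have h1 : i - (i - 1) = 1 := by ring
      rw [h1, ZMod.val_one]
      have h2 : m - 1 - 1 = m - 2 := by omega
      rw [h2, pow_one]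
      ring
    · intro a _ ha
      have hQ : QtildeS m n g lam phi V (i, j) (a, t) = 0 := by
        show (if i = a + 1 then _ else 0) = 0
        rw [if_neg]
        intro hc
        exact ha (by rw [hc]; ring)
      rw [hQ, zero_mul]
    · intro hni
      exact absurd (Finset.mem_univ _) hni
  · intro h _ hh
    have hB : Bmat m n V (h, t) (i, j) = 0 := by
      show (if h = i then V h t j else 0) = 0
      rw [if_neg hh]
    rw [hB, mul_zero]
  · intro hni
    exact absurd (Finset.mem_univ _) hni

end SpinTrace
lemma CfunS_continuous (m n : ℕ) [NeZero m] (g : ZMod m → ℂ) (lam phi : Fin n → ℂ)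
    (V : ZMod m → Matrix (Fin n) (Fin n) ℂ) :
    Continuous fun w : ℂ => CfunS m n g lam phi V w := by
  have hM : Continuous fun w : ℂ =>
      w • (1 : Matrix (ZMod m × Fin n) (ZMod m × Fin n) ℂ) - Ltilde m n lam :=
    (continuous_id.smul continuous_const).sub continuous_const
  exact ((continuous_const.matrix_mul hM.matrix_adjugate).matrix_mul continuous_const).matrix_trace

theorem spin_Cfun_formula' (m n d : ℕ) [NeZero m] (hm : 2 ≤ m) (hn : 0 < n) (hd : 0 < d)
    (lam phi : Fin n → ℂ) (g : ZMod m → ℂ)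
    (hlam : ∀ j, lam j ≠ 0)
    (hsep : ∀ j k : Fin n, j ≠ k → lam j ^ m ≠ lam k ^ m)
    (vt : ZMod m → Matrix (Fin n) (Fin d) ℂ) (wt : ZMod m → Matrix (Fin d) (Fin n) ℂ)
    (hV : ∀ j : Fin n, ∑ i : ZMod m, (vt i * wt i) j j = gAbs m g) (z : ℂ) :
    CfunS m n g lam phi (fun i => vt i * wt i) z =
      ∑ i : ZMod m, ∑ j : Fin n, ∑ t : Fin n,
        (vt i * wt i) t j * QtildeS m n g lam phi (fun i' => vt i' * wt i') (i, j) (i - 1, t) *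
          lam t * z ^ (m - 2) * ∏ l ∈ Finset.univ.erase t, (z ^ m - lam l ^ m) := by
  classical
  set V : ZMod m → Matrix (Fin n) (Fin n) ℂ := fun i => vt i * wt i with hVdef
  set f : ℂ → ℂ := fun w => CfunS m n g lam phi V w with hf
  set F : ℂ → ℂ := fun w => ∑ i : ZMod m, ∑ j : Fin n, ∑ t : Fin n,
      V i t j * QtildeS m n g lam phi V (i, j) (i - 1, t) * lam t * w ^ (m - 2) *
        ∏ l ∈ Finset.univ.erase t, (w ^ m - lam l ^ m) with hF
  suffices h : f = F by exact congrFun h z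
  have hbad : ({w : ℂ | ∃ l : Fin n, w ^ m = lam l ^ m}).Finite := by
    have hsub : {w : ℂ | ∃ l : Fin n, w ^ m = lam l ^ m} ⊆
        ⋃ l : Fin n, {w : ℂ | (Polynomial.X ^ m - Polynomial.C (lam l ^ m)).IsRoot w} := by
      rintro w ⟨l, hl⟩
      exact Set.mem_iUnion.mpr ⟨l, by simp [Polynomial.IsRoot, sub_eq_zero, hl]⟩
    exact Set.Finite.subset
      (Set.finite_iUnion fun l => Polynomial.finite_setOf_isRoot
        (Polynomial.X_pow_sub_C_ne_zero (by omega) _)) hsub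
  have hdense : Dense ({w : ℂ | ∃ l : Fin n, w ^ m = lam l ^ m}ᶜ) :=
    Set.Countable.dense_compl ℂ hbad.countable
  have hcf : Continuous f := CfunS_continuous m n g lam phi V
  have hcF : Continuous F := by
    rw [hF]
    apply continuous_finset_sum
    intro i _
    apply continuous_finset_sum
    intro j _
    apply continuous_finset_sum
    intro t _
    exact (continuous_const.mul (continuous_pow (m - 2))).mul
      (continuous_finset_prod _ fun l _ => (continuous_pow m).sub continuous_const)
  have heq : Set.EqOn f F ({w : ℂ | ∃ l : Fin n, w ^ m = lam l ^ m}ᶜ) := by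
    intro w hw
    simp only [Set.mem_compl_iff, Set.mem_setOf_eq, not_exists] at hw
    exact CfunS_formula_of_good m n hm g lam phi V w hw
  exact Continuous.ext_on hdense hcf hcF heq
/-- Spin case, `m ≥ 2`:
`C(z) = Σ_{i=0}^{m−1} Σ_{j} Σ_{t} (V_i)_{tj} · Q̃_{(i,j),(i−1,t)} · λ_t · z^{m−2} ·
∏_{ℓ≠t}(z^m − λ_ℓ^m)`. -/
theorem spin_Cfun_formula (m n d : ℕ) [NeZero m] (hm : 2 ≤ m) (hn : 0 < n) (hd : 0 < d)
    (lam phi : Fin n → ℂ) (g : ZMod m → ℂ)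
    (hlam : ∀ j, lam j ≠ 0)
    (hsep : ∀ j k : Fin n, j ≠ k → lam j ^ m ≠ lam k ^ m)
    (vt : ZMod m → Matrix (Fin n) (Fin d) ℂ) (wt : ZMod m → Matrix (Fin d) (Fin n) ℂ)
    (hV : ∀ j : Fin n, ∑ i : ZMod m, (vt i * wt i) j j = gAbs m g) (z : ℂ) :
    CfunS m n g lam phi (fun i => vt i * wt i) z =
      ∑ i : ZMod m, ∑ j : Fin n, ∑ t : Fin n,
        (vt i * wt i) t j * QtildeS m n g lam phi (fun i' => vt i' * wt i') (i, j) (i - 1, t) *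
          lam t * z ^ (m - 2) * ∏ l ∈ Finset.univ.erase t, (z ^ m - lam l ^ m) := by
  exact spin_Cfun_formula' m n d hm hn hd lam phi g hlam hsep vt wt hV z
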